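/- Let P be a consensus matrix with P*P = PP*, and let δ_in be the maximum in-degree (excluding self-loops) of the directed graph of P. Then for all nodes u, v, (1/(4δ_in − 2)) R_{uv}(G(P)) ≤ R_{uv}(G(P*P)) ≤ R_{uv}(G(P)). -/
import Mathlib


open Matrix

/-- A consensus matrix: entrywise nonnegative, row-stochastic, irreducible
(for every pair of indices some power has a positive entry), with positive diagonal. -/
def IsConsensus {n : ℕ} (P : Matrix (Fin n) (Fin n) ℝ) : Prop :=
  (∀ i j, 0 ≤ P i j) ∧ (∀ i, (∑ j, P i j) = 1) ∧
  (∀ i j, ∃ k : ℕ, 0 < (P ^ k) i j) ∧ (∀ i, 0 < P i i)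

/-- `mu` is the invariant measure of `P`: strictly positive, sums to `1`,
and is a left fixed vector of `P`. -/
def IsInvMeasure {n : ℕ} (P : Matrix (Fin n) (Fin n) ℝ) (mu : Fin n → ℝ) : Prop :=
  (∀ i, 0 < mu i) ∧ (∑ i, mu i) = 1 ∧ (∀ j, (∑ i, mu i * P i j) = mu j)

/-- The time reversal `P* = Π⁻¹ Pᵀ Π` with `Π = diag(mu)`. -/
noncomputable def Pstar {n : ℕ} (P : Matrix (Fin n) (Fin n) ℝ) (mu : Fin n → ℝ) :
    Matrix (Fin n) (Fin n) ℝ :=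
  Matrix.diagonal (fun i => (mu i)⁻¹) * Pᵀ * Matrix.diagonal mu

/-- The graph Laplacian `L(C) = diag(C 𝟙) − C`. -/
def lap {n : ℕ} (C : Matrix (Fin n) (Fin n) ℝ) : Matrix (Fin n) (Fin n) ℝ :=
  Matrix.diagonal (fun i => ∑ j, C i j) - C

/-- A conductance matrix: symmetric, entrywise nonnegative, irreducible. -/
def IsConductance {n : ℕ} (C : Matrix (Fin n) (Fin n) ℝ) : Prop :=
  Cᵀ = C ∧ (∀ i j, 0 ≤ C i j) ∧ (∀ i j, ∃ k : ℕ, 0 < (C ^ k) i j)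

/-- The effective resistance between `a` and `b`: `v a - v b` for a solution `v`
of `L(C) v = e_a - e_b` (junk value `0` if no solution exists). -/
noncomputable def effRes {n : ℕ} (C : Matrix (Fin n) (Fin n) ℝ) (a b : Fin n) : ℝ :=
  open Classical in
  if h : ∃ v : Fin n → ℝ, lap C *ᵥ v = Pi.single a 1 - Pi.single b 1 then
    h.choose a - h.choose b
  else 0

/-- The average effective resistance `(1/(2 n²)) Σ_{u,v} R_{uv}(C)`. -/
noncomputable def avgRes {n : ℕ} (C : Matrix (Fin n) (Fin n) ℝ) : ℝ :=
  (1 / (2 * (n : ℝ) ^ 2)) * ∑ u, ∑ v, effRes C u v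

/-- The unit-conductance matrix of the undirected graph associated with `P`:
edge `{u,v}` iff `P u v ≠ 0` or `P v u ≠ 0`. -/
noncomputable def adjMat {n : ℕ} (P : Matrix (Fin n) (Fin n) ℝ) : Matrix (Fin n) (Fin n) ℝ :=
  Matrix.of fun i j => if i ≠ j ∧ (P i j ≠ 0 ∨ P j i ≠ 0) then (1 : ℝ) else 0

/-- The LQ cost `J(P) = (1/n) Σ_{t≥0} ‖P^t − 𝟙 muᵀ‖_F²`. -/
noncomputable def LQcost {n : ℕ} (P : Matrix (Fin n) (Fin n) ℝ) (mu : Fin n → ℝ) : ℝ :=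
  (1 / (n : ℝ)) *
    ∑' t : ℕ, ∑ i, ∑ j,
      ((P ^ t - Matrix.vecMulVec (fun _ => 1) mu : Matrix (Fin n) (Fin n) ℝ) i j) ^ 2

/-- The weighted LQ cost `J_w(P)`. -/
noncomputable def LQcostW {n : ℕ} (P : Matrix (Fin n) (Fin n) ℝ) (mu : Fin n → ℝ) : ℝ :=
  ∑' t : ℕ, Matrix.trace ((1 - Matrix.vecMulVec mu (fun _ => 1)) * Pᵀ ^ t *
    Matrix.diagonal mu * P ^ t * (1 - Matrix.vecMulVec (fun _ => 1) mu))

/-- The Green matrix `G(P) = Σ_{t≥0} (P^t − 𝟙 muᵀ)`. -/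
noncomputable def Green {n : ℕ} (P : Matrix (Fin n) (Fin n) ℝ) (mu : Fin n → ℝ) :
    Matrix (Fin n) (Fin n) ℝ :=
  ∑' t : ℕ, (P ^ t - Matrix.vecMulVec (fun _ => 1) mu)

/-- Out-degree (excluding self-loops) of node `i` in the directed graph of `P`. -/
noncomputable def outDeg {n : ℕ} (P : Matrix (Fin n) (Fin n) ℝ) (i : Fin n) : ℕ :=
  (Finset.univ.filter fun j => j ≠ i ∧ P i j ≠ 0).card

/-- In-degree (excluding self-loops) of node `j` in the directed graph of `P`. -/
noncomputable def inDeg {n : ℕ} (P : Matrix (Fin n) (Fin n) ℝ) (j : Fin n) : ℕ :=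
  (Finset.univ.filter fun i => i ≠ j ∧ P i j ≠ 0).card


lemma dot_single_sub {n : ℕ} (a b : Fin n) (w : Fin n → ℝ) :
    (Pi.single a 1 - Pi.single b 1 : Fin n → ℝ) ⬝ᵥ w = w a - w b := by
  simp [sub_dotProduct, single_dotProduct]

lemma lap_mulVec {n : ℕ} (C : Matrix (Fin n) (Fin n) ℝ) (x : Fin n → ℝ) (i : Fin n) :
    (lap C *ᵥ x) i = (∑ j, C i j) * x i - ∑ j, C i j * x j := by
  simp [lap, sub_mulVec, mulVec, dotProduct, diagonal, sub_mul, Finset.sum_sub_distrib,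
    ite_mul, Finset.sum_ite_eq]

lemma lap_quad {n : ℕ} (C : Matrix (Fin n) (Fin n) ℝ) (hsym : Cᵀ = C) (x : Fin n → ℝ) :
    2 * (x ⬝ᵥ (lap C *ᵥ x)) = ∑ i, ∑ j, C i j * (x i - x j) ^ 2 := by
  have hs : ∀ i j, C j i = C i j := fun i j => (congrFun (congrFun hsym j) i).symm
  have h1 : x ⬝ᵥ (lap C *ᵥ x) = ∑ i, ∑ j, (C i j * x i * x i - C i j * x i * x j) := by
    unfold dotProduct
    simp only [lap_mulVec, mul_sub, Finset.mul_sum, Finset.sum_mul, Finset.sum_sub_distrib]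
    congr 1 <;> exact Finset.sum_congr rfl fun i _ => Finset.sum_congr rfl fun j _ => by ring
  have h2 : ∑ i, ∑ j, C i j * x j * x j = ∑ i, ∑ j, C i j * x i * x i := by
    rw [Finset.sum_comm]
    exact Finset.sum_congr rfl fun i _ => Finset.sum_congr rfl fun j _ => by rw [hs]
  calc 2 * (x ⬝ᵥ (lap C *ᵥ x))
      = ∑ i, ∑ j, (C i j * x i * x i - 2*(C i j * x i * x j)) + ∑ i, ∑ j, C i j * x i * x i := by
        rw [h1, Finset.mul_sum, ← Finset.sum_add_distrib]
        refine Finset.sum_congr rfl fun i _ => ?_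
        rw [Finset.mul_sum, ← Finset.sum_add_distrib]
        exact Finset.sum_congr rfl fun j _ => by ring
    _ = ∑ i, ∑ j, (C i j * x i * x i - 2*(C i j * x i * x j)) + ∑ i, ∑ j, C i j * x j * x j := by
        rw [h2]
    _ = ∑ i, ∑ j, C i j * (x i - x j) ^ 2 := by
        rw [← Finset.sum_add_distrib]
        refine Finset.sum_congr rfl fun i _ => ?_
        rw [← Finset.sum_add_distrib]
        exact Finset.sum_congr rfl fun j _ => by ring

lemma dirichlet_compare {n : ℕ} (L1 L2 : Matrix (Fin n) (Fin n) ℝ) (hsym : L1ᵀ = L1)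
    (hpsd : ∀ x, 0 ≤ x ⬝ᵥ (L1 *ᵥ x))
    (hle : ∀ x, x ⬝ᵥ (L1 *ᵥ x) ≤ x ⬝ᵥ (L2 *ᵥ x))
    (f v1 v2 : Fin n → ℝ) (h1 : L1 *ᵥ v1 = f) (h2 : L2 *ᵥ v2 = f) :
    f ⬝ᵥ v2 ≤ f ⬝ᵥ v1 := by
  have key : ∀ x : Fin n → ℝ, 2 * (f ⬝ᵥ x) - f ⬝ᵥ v1 ≤ x ⬝ᵥ (L1 *ᵥ x) := by
    intro x
    have hv : v1 ⬝ᵥ (L1 *ᵥ x) = f ⬝ᵥ x := by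
      rw [Matrix.dotProduct_mulVec, ← hsym, Matrix.vecMul_transpose, h1]
    have h0 := hpsd (x - v1)
    have e1 : (x - v1) ⬝ᵥ (L1 *ᵥ (x - v1)) = x ⬝ᵥ (L1 *ᵥ x) - 2*(f ⬝ᵥ x) + f ⬝ᵥ v1 := by
      rw [mulVec_sub, dotProduct_sub, sub_dotProduct, sub_dotProduct, h1, hv,
        dotProduct_comm x f, dotProduct_comm v1 f]
      ring
    linarith [e1 ▸ h0]
  have e2 : f ⬝ᵥ v2 = v2 ⬝ᵥ (L2 *ᵥ v2) := by
    rw [← h2, dotProduct_comm]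
  linarith [key v2, hle v2, e2]

lemma exists_sol {n : ℕ} (A : Matrix (Fin n) (Fin n) ℝ) (hsym : Aᵀ = A)
    (hnn : ∀ i j, 0 ≤ A i j)
    (hconn : ∀ x : Fin n → ℝ, (∀ i j, A i j ≠ 0 → x i = x j) → ∀ i j, x i = x j)
    (hn : 0 < n) (f : Fin n → ℝ) (hf : ∑ i, f i = 0) :
    ∃ w, lap A *ᵥ w = f := by
  classical
  set J : Matrix (Fin n) (Fin n) ℝ := Matrix.of (fun _ _ => (1:ℝ)) with hJ
  set M : Matrix (Fin n) (Fin n) ℝ := lap A + J with hM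
  have hJv : ∀ x : Fin n → ℝ, ∀ i, (J *ᵥ x) i = ∑ j, x j := by
    intro x i; simp [hJ, mulVec, dotProduct]
  have hqJ : ∀ x : Fin n → ℝ, x ⬝ᵥ (J *ᵥ x) = (∑ j, x j) ^ 2 := by
    intro x
    unfold dotProduct
    simp only [hJv]
    rw [← Finset.sum_mul, sq]
  have hqnn : ∀ x : Fin n → ℝ, 0 ≤ x ⬝ᵥ (lap A *ᵥ x) := by
    intro x
    have := lap_quad A hsym x
    have hnn2 : 0 ≤ ∑ i, ∑ j, A i j * (x i - x j) ^ 2 :=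
      Finset.sum_nonneg fun i _ => Finset.sum_nonneg fun j _ =>
        mul_nonneg (hnn i j) (sq_nonneg _)
    linarith
  have hker : ∀ x : Fin n → ℝ, M *ᵥ x = 0 → x = 0 := by
    intro x hx
    have hq : x ⬝ᵥ (M *ᵥ x) = 0 := by rw [hx, dotProduct_zero]
    have hsplit : x ⬝ᵥ (M *ᵥ x) = x ⬝ᵥ (lap A *ᵥ x) + (∑ j, x j) ^ 2 := by
      rw [hM, add_mulVec, dotProduct_add, hqJ]
    have h1 : x ⬝ᵥ (lap A *ᵥ x) = 0 ∧ (∑ j, x j) = 0 := by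
      constructor
      · nlinarith [hqnn x, sq_nonneg (∑ j, x j)]
      · nlinarith [hqnn x, sq_nonneg (∑ j, x j)]
    have hz : ∑ i, ∑ j, A i j * (x i - x j) ^ 2 = 0 := by
      have := lap_quad A hsym x; linarith [h1.1]
    have hterm : ∀ i j, A i j * (x i - x j) ^ 2 = 0 := by
      intro i j
      have h₁ := (Finset.sum_eq_zero_iff_of_nonneg (fun i _ =>
        Finset.sum_nonneg fun j _ => mul_nonneg (hnn i j) (sq_nonneg _))).mp hz i
        (Finset.mem_univ i)
      exact (Finset.sum_eq_zero_iff_of_nonneg (fun j _ =>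
        mul_nonneg (hnn i j) (sq_nonneg _))).mp h₁ j (Finset.mem_univ j)
    have hxconst : ∀ i j, x i = x j := by
      refine hconn x fun i j hA => ?_
      have := hterm i j
      rcases mul_eq_zero.mp this with h | h
      · exact absurd h hA
      · have := pow_eq_zero_iff (n := 2) (by norm_num) |>.mp h
        linarith [sub_eq_zero.mp this]
    -- x is constant and sums to zero, so x = 0
    funext i
    have hsum : ∑ j, x j = (n : ℝ) * x i := by
      rw [Finset.sum_congr rfl fun j _ => hxconst j i]
      simp [Finset.sum_const, Finset.card_univ, mul_comm]
    have : (n : ℝ) * x i = 0 := by rw [← hsum]; exact h1.2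
    have hn' : (n : ℝ) ≠ 0 := Nat.cast_ne_zero.mpr hn.ne'
    simpa [hn'] using mul_eq_zero.mp this
  have hinj : Function.Injective M.mulVecLin := by
    rw [← LinearMap.ker_eq_bot]
    exact LinearMap.ker_eq_bot'.mpr fun m hm => hker m (by simpa using hm)
  obtain ⟨w, hw⟩ := LinearMap.surjective_of_injective hinj f
  rw [Matrix.mulVecLin_apply] at hw
  -- sum of (lap A *ᵥ w) is zero
  have hlapsum : ∑ i, (lap A *ᵥ w) i = 0 := by
    have hs : ∀ i j, A j i = A i j := fun i j => (congrFun (congrFun hsym j) i).symm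
    simp only [lap_mulVec]
    rw [Finset.sum_sub_distrib]
    have : ∑ i, (∑ j, A i j) * w i = ∑ i, ∑ j, A i j * w j := by
      rw [Finset.sum_comm]
      simp only [Finset.sum_mul]
      exact Finset.sum_congr rfl fun i _ => Finset.sum_congr rfl fun j _ => by rw [hs]
    rw [this, sub_self]
  have hwsum : ∑ j, w j = 0 := by
    have h0 : ∑ i, f i = ∑ i, (M *ᵥ w) i := by rw [hw]
    have h2 : ∑ i, (M *ᵥ w) i = ∑ i, (lap A *ᵥ w) i + (n : ℝ) * ∑ j, w j := by
      simp only [hM, add_mulVec, Pi.add_apply, Finset.sum_add_distrib]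
      congr 1
      simp only [hJv]
      simp [Finset.sum_const, Finset.card_univ]
    rw [h2, hlapsum, zero_add] at h0
    have key : (n : ℝ) * ∑ j, w j = 0 := by rw [← h0, hf]
    have hn' : (n : ℝ) ≠ 0 := Nat.cast_ne_zero.mpr hn.ne'
    exact (mul_eq_zero.mp key).resolve_left hn'
  refine ⟨w, ?_⟩
  have : J *ᵥ w = 0 := by
    funext i; rw [hJv w i, hwsum]; rfl
  rw [hM, add_mulVec, this, add_zero] at hw
  exact hw

section P

variable {n : ℕ} (P : Matrix (Fin n) (Fin n) ℝ) (mu : Fin n → ℝ)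

lemma pow_entry_nonneg (hnn : ∀ i j, 0 ≤ P i j) : ∀ (k : ℕ) i j, 0 ≤ (P ^ k) i j := by
  intro k
  induction k with
  | zero => intro i j; simp [Matrix.one_apply]; split <;> norm_num
  | succ k ih =>
    intro i j
    rw [pow_succ, Matrix.mul_apply]
    exact Finset.sum_nonneg fun m _ => mul_nonneg (ih i m) (hnn m j)

lemma Pstar_apply (i j : Fin n) : Pstar P mu i j = (mu i)⁻¹ * P j i * mu j := by
  unfold Pstar
  rw [Matrix.mul_diagonal, Matrix.diagonal_mul, Matrix.transpose_apply]

lemma PsP_apply (i j : Fin n) :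
    (Pstar P mu * P) i j = ∑ k, (mu i)⁻¹ * P k i * mu k * P k j := by
  rw [Matrix.mul_apply]
  exact Finset.sum_congr rfl fun k _ => by rw [Pstar_apply]

lemma PPs_apply (i j : Fin n) :
    (P * Pstar P mu) i j = ∑ k, P i k * ((mu k)⁻¹ * P j k * mu j) := by
  rw [Matrix.mul_apply]
  exact Finset.sum_congr rfl fun k _ => by rw [Pstar_apply]

lemma PsP_ne_iff (hnn : ∀ i j, 0 ≤ P i j) (hmu : ∀ i, 0 < mu i) (i j : Fin n) :
    (Pstar P mu * P) i j ≠ 0 ↔ ∃ k, P k i ≠ 0 ∧ P k j ≠ 0 := by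
  rw [PsP_apply]
  have hterm : ∀ k, 0 ≤ (mu i)⁻¹ * P k i * mu k * P k j := fun k =>
    mul_nonneg (mul_nonneg (mul_nonneg (inv_nonneg.mpr (hmu i).le) (hnn k i)) (hmu k).le)
      (hnn k j)
  constructor
  · intro h
    by_contra hc
    push_neg at hc
    refine h (Finset.sum_eq_zero fun k _ => ?_)
    rcases Classical.em (P k i = 0) with h0 | h0
    · rw [h0]; ring
    · rw [hc k h0]; ring
  · rintro ⟨k, hk1, hk2⟩
    have hpos : 0 < (mu i)⁻¹ * P k i * mu k * P k j := by
      have p1 : 0 < P k i := (hnn k i).lt_of_ne (Ne.symm hk1)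
      have p2 : 0 < P k j := (hnn k j).lt_of_ne (Ne.symm hk2)
      have p3 : 0 < mu i := hmu i
      have p4 : 0 < mu k := hmu k
      positivity
    have : 0 < ∑ k, (mu i)⁻¹ * P k i * mu k * P k j :=
      Finset.sum_pos' (fun k _ => hterm k) ⟨k, Finset.mem_univ k, hpos⟩
    exact this.ne'
  
lemma PPs_ne_iff (hnn : ∀ i j, 0 ≤ P i j) (hmu : ∀ i, 0 < mu i) (i j : Fin n) :
    (P * Pstar P mu) i j ≠ 0 ↔ ∃ k, P i k ≠ 0 ∧ P j k ≠ 0 := by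
  rw [PPs_apply]
  have hterm : ∀ k, 0 ≤ P i k * ((mu k)⁻¹ * P j k * mu j) := fun k =>
    mul_nonneg (hnn i k)
      (mul_nonneg (mul_nonneg (inv_nonneg.mpr (hmu k).le) (hnn j k)) (hmu j).le)
  constructor
  · intro h
    by_contra hc
    push_neg at hc
    refine h (Finset.sum_eq_zero fun k _ => ?_)
    rcases Classical.em (P i k = 0) with h0 | h0
    · rw [h0]; ring
    · rw [hc k h0]; ring
  · rintro ⟨k, hk1, hk2⟩
    have hpos : 0 < P i k * ((mu k)⁻¹ * P j k * mu j) := by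
      have p1 : 0 < P i k := (hnn i k).lt_of_ne (Ne.symm hk1)
      have p2 : 0 < P j k := (hnn j k).lt_of_ne (Ne.symm hk2)
      have p3 : 0 < mu k := hmu k
      have p4 : 0 < mu j := hmu j
      positivity
    have : 0 < ∑ k, P i k * ((mu k)⁻¹ * P j k * mu j) :=
      Finset.sum_pos' (fun k _ => hterm k) ⟨k, Finset.mem_univ k, hpos⟩
    exact this.ne'

lemma adjMat_symm (M : Matrix (Fin n) (Fin n) ℝ) : (adjMat M)ᵀ = adjMat M := by
  funext i j
  simp only [transpose_apply, adjMat, Matrix.of_apply]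
  congr 1
  · simp only [eq_iff_iff]
    constructor
    · rintro ⟨h1, h2⟩; exact ⟨h1.symm, h2.symm⟩
    · rintro ⟨h1, h2⟩; exact ⟨h1.symm, h2.symm⟩

lemma adjMat_nonneg (M : Matrix (Fin n) (Fin n) ℝ) (i j : Fin n) : 0 ≤ adjMat M i j := by
  simp only [adjMat, Matrix.of_apply]; split <;> norm_num

lemma adjMat_eq_one {M : Matrix (Fin n) (Fin n) ℝ} {i j : Fin n}
    (h : i ≠ j) (h2 : M i j ≠ 0 ∨ M j i ≠ 0) : adjMat M i j = 1 := by
  simp only [adjMat, Matrix.of_apply, if_pos (And.intro h h2)]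

lemma adjMat_ne_zero {M : Matrix (Fin n) (Fin n) ℝ} {i j : Fin n}
    (h : adjMat M i j ≠ 0) : i ≠ j ∧ (M i j ≠ 0 ∨ M j i ≠ 0) := by
  by_contra hc
  exact h (by simp only [adjMat, Matrix.of_apply, if_neg hc])

lemma conn_of_irred (hirr : ∀ i j, ∃ k : ℕ, 0 < (P ^ k) i j) (x : Fin n → ℝ)
    (hx : ∀ a b, P a b ≠ 0 → x a = x b) : ∀ i j, x i = x j := by
  have key : ∀ (k : ℕ) i j, (P ^ k) i j ≠ 0 → x i = x j := by
    intro k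
    induction k with
    | zero =>
      intro i j h
      have : i = j := by
        by_contra hij
        exact h (by rw [pow_zero]; exact Matrix.one_apply_ne hij)
      rw [this]
    | succ k ih =>
      intro i j h
      rw [pow_succ, Matrix.mul_apply] at h
      have : ∃ m, (P ^ k) i m * P m j ≠ 0 := by
        by_contra hc
        push_neg at hc
        exact h (Finset.sum_eq_zero fun m _ => hc m)
      obtain ⟨m, hm⟩ := this
      rcases mul_ne_zero_iff.mp hm with ⟨hm1, hm2⟩
      exact (ih i m hm1).trans (hx m j hm2)
  intro i j
  obtain ⟨k, hk⟩ := hirr i j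
  exact key k i j hk.ne'

lemma exists_offdiag_edge {k : ℕ} : ∀ {i j : Fin n}, i ≠ j → (P ^ k) i j ≠ 0 →
    ∃ a b, a ≠ b ∧ P a b ≠ 0 := by
  induction k with
  | zero =>
    intro i j hij h
    rw [pow_zero, Matrix.one_apply, if_neg hij] at h
    exact absurd rfl h
  | succ k ih =>
    intro i j hij h
    rw [pow_succ, Matrix.mul_apply] at h
    have : ∃ m, (P ^ k) i m * P m j ≠ 0 := by
      by_contra hc
      push_neg at hc
      exact h (Finset.sum_eq_zero fun m _ => hc m)
    obtain ⟨m, hm⟩ := this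
    rcases mul_ne_zero_iff.mp hm with ⟨hm1, hm2⟩
    rcases Classical.em (m = j) with rfl | hmj
    · exact ih hij hm1
    · exact ⟨m, j, hmj, hm2⟩

lemma one_le_din (hirr : ∀ i j, ∃ k : ℕ, 0 < (P ^ k) i j) {u v : Fin n} (huv : u ≠ v)
    (din : ℕ) (hd : ∀ j, inDeg P j ≤ din) : 1 ≤ din := by
  obtain ⟨k, hk⟩ := hirr u v
  obtain ⟨a, b, hab, hPab⟩ := exists_offdiag_edge P huv hk.ne'
  refine le_trans ?_ (hd b)
  exact Finset.card_pos.mpr ⟨a, Finset.mem_filter.mpr ⟨Finset.mem_univ a, hab, hPab⟩⟩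

end P

-- helper: counting sums of indicators
lemma sum_ite_count {n : ℕ} (Q : Fin n → Prop) [DecidablePred Q] (c : ℝ) :
    ∑ j, (if Q j then c else 0) = ((Finset.univ.filter Q).card : ℝ) * c := by
  rw [← Finset.sum_filter, Finset.sum_const, nsmul_eq_mul]

lemma inner_bound {n : ℕ} (Ek : Finset (Fin n)) {din : ℕ} (hcard : Ek.card ≤ din)
    (a : Fin n → ℝ) (ha : ∀ i, 0 ≤ a i) :
    ∑ i, ∑ j, (if i ∈ Ek ∧ j ∈ Ek ∧ j ≠ i then a i else 0) ≤
      ((din : ℝ) - 1) * ∑ i, (if i ∈ Ek then a i else 0) := by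
  classical
  rw [Finset.mul_sum]
  refine Finset.sum_le_sum fun i _ => ?_
  by_cases hi : i ∈ Ek
  · have e1 : ∑ j, (if i ∈ Ek ∧ j ∈ Ek ∧ j ≠ i then a i else 0)
        = ∑ j, (if j ∈ Ek ∧ j ≠ i then a i else 0) := by
      refine Finset.sum_congr rfl fun j _ => ?_
      congr 1
      simp [hi]
    rw [e1, sum_ite_count (fun j => j ∈ Ek ∧ j ≠ i) (a i), if_pos hi]
    have hfe : Finset.univ.filter (fun j => j ∈ Ek ∧ j ≠ i) = Ek.erase i := by
      ext j; simp [Finset.mem_erase, and_comm]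
    rw [hfe, Finset.card_erase_of_mem hi]
    have hc1 : 1 ≤ Ek.card := Finset.card_pos.mpr ⟨i, hi⟩
    have : ((Ek.card - 1 : ℕ) : ℝ) ≤ (din : ℝ) - 1 := by
      rw [Nat.cast_sub hc1]
      have : (Ek.card : ℝ) ≤ (din : ℝ) := Nat.cast_le.mpr hcard
      simp only [Nat.cast_one]
      linarith
    exact mul_le_mul_of_nonneg_right this (ha i) |>.trans_eq rfl
  · have e1 : ∑ j, (if i ∈ Ek ∧ j ∈ Ek ∧ j ≠ i then a i else 0) = 0 :=
      Finset.sum_eq_zero fun j _ => if_neg (fun h => hi h.1)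
    rw [e1, if_neg hi, mul_zero]


lemma quad_bound {n : ℕ} (P : Matrix (Fin n) (Fin n) ℝ) (mu : Fin n → ℝ)
    (hnn : ∀ i j, 0 ≤ P i j) (hdiag : ∀ i, 0 < P i i) (hmu : ∀ i, 0 < mu i)
    (hcomm : Pstar P mu * P = P * Pstar P mu)
    {din : ℕ} (hd : ∀ j, inDeg P j ≤ din) (h1 : 1 ≤ din) (x : Fin n → ℝ) :
    ∑ i, ∑ j, adjMat (Pstar P mu * P) i j * (x i - x j) ^ 2 ≤
      (4 * (din : ℝ) - 2) * ∑ i, ∑ j, adjMat P i j * (x i - x j) ^ 2 := by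
  classical
  set g : Fin n → Fin n → ℝ := fun i j => (x i - x j) ^ 2 with hg
  have hgnn : ∀ i j, 0 ≤ g i j := fun i j => sq_nonneg _
  set cond : Fin n → Fin n → Prop :=
    fun i j => ∃ k, k ≠ i ∧ k ≠ j ∧ P i k ≠ 0 ∧ P j k ≠ 0 with hcond
  set qf1 : ℝ := ∑ i, ∑ j, adjMat P i j * g i j with hqf1
  have hqf1nn : 0 ≤ qf1 := Finset.sum_nonneg fun i _ => Finset.sum_nonneg fun j _ =>
    mul_nonneg (adjMat_nonneg _ _ _) (hgnn i j)
  -- Step A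
  have stepA : ∑ i, ∑ j, adjMat (Pstar P mu * P) i j * g i j ≤
      qf1 + ∑ i, ∑ j, (if cond i j then g i j else 0) := by
    rw [hqf1, ← Finset.sum_add_distrib]
    refine Finset.sum_le_sum fun i _ => ?_
    rw [← Finset.sum_add_distrib]
    refine Finset.sum_le_sum fun j _ => ?_
    by_cases h2 : i ≠ j ∧ ((Pstar P mu * P) i j ≠ 0 ∨ (Pstar P mu * P) j i ≠ 0)
    · have hA2 : adjMat (Pstar P mu * P) i j = 1 := adjMat_eq_one h2.1 h2.2
      have hck : ∃ k, P i k ≠ 0 ∧ P j k ≠ 0 := by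
        rcases h2.2 with h | h
        · rw [hcomm] at h
          exact (PPs_ne_iff P mu hnn hmu i j).mp h
        · rw [hcomm] at h
          obtain ⟨k, hk1, hk2⟩ := (PPs_ne_iff P mu hnn hmu j i).mp h
          exact ⟨k, hk2, hk1⟩
      by_cases hdir : P i j ≠ 0 ∨ P j i ≠ 0
      · have hA1 : adjMat P i j = 1 := adjMat_eq_one h2.1 hdir
        rw [hA2, hA1]
        have : 0 ≤ (if cond i j then g i j else 0) := by
          split <;> [exact hgnn i j; exact le_refl 0]
        linarith
      · push_neg at hdir
        have hcij : cond i j := by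
          obtain ⟨k, hk1, hk2⟩ := hck
          refine ⟨k, fun h => ?_, fun h => ?_, hk1, hk2⟩
          · subst h; exact hk2 hdir.2
          · subst h; exact hk1 hdir.1
        rw [hA2, if_pos hcij, one_mul]
        have := mul_nonneg (adjMat_nonneg P i j) (hgnn i j)
        linarith
    · have hA2 : adjMat (Pstar P mu * P) i j = 0 := by
        simp only [adjMat, Matrix.of_apply, if_neg h2]
      rw [hA2, zero_mul]
      have h3 := mul_nonneg (adjMat_nonneg P i j) (hgnn i j)
      have : 0 ≤ (if cond i j then g i j else 0) := by
        split <;> [exact hgnn i j; exact le_refl 0]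
      linarith
  -- Step B : bound the indicator by a sum over witnesses k
  set Ek : Fin n → Finset (Fin n) :=
    fun k => Finset.univ.filter (fun a => a ≠ k ∧ P a k ≠ 0) with hEk
  have hEkcard : ∀ k, (Ek k).card ≤ din := fun k => hd k
  have stepB : ∑ i, ∑ j, (if cond i j then g i j else 0) ≤
      ∑ k, ∑ i, ∑ j, (if i ∈ Ek k ∧ j ∈ Ek k ∧ j ≠ i then g i j else 0) := by
    have pt : ∀ i j, (if cond i j then g i j else 0) ≤
        ∑ k, (if i ∈ Ek k ∧ j ∈ Ek k ∧ j ≠ i then g i j else 0) := by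
      intro i j
      have hnnsum : ∀ k, (0:ℝ) ≤ (if i ∈ Ek k ∧ j ∈ Ek k ∧ j ≠ i then g i j else 0) := by
        intro k; split <;> [exact hgnn i j; exact le_refl 0]
      by_cases hc : cond i j
      · rw [if_pos hc]
        by_cases hij : i = j
        · subst hij
          have h0 : g i i = 0 := by simp [hg]
          rw [h0]
          exact Finset.sum_nonneg fun k _ => by split <;> norm_num
        · obtain ⟨k, hk1, hk2, hk3, hk4⟩ := hc
          have hmem : i ∈ Ek k ∧ j ∈ Ek k ∧ j ≠ i := by
            refine ⟨?_, ?_, fun h => hij (h.symm)⟩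
            · exact Finset.mem_filter.mpr ⟨Finset.mem_univ i, fun h => hk1 h.symm, hk3⟩
            · exact Finset.mem_filter.mpr ⟨Finset.mem_univ j, fun h => hk2 h.symm, hk4⟩
          calc g i j = (if i ∈ Ek k ∧ j ∈ Ek k ∧ j ≠ i then g i j else 0) := by
                rw [if_pos hmem]
            _ ≤ _ := Finset.single_le_sum (fun k _ => hnnsum k) (Finset.mem_univ k)
      · rw [if_neg hc]
        exact Finset.sum_nonneg fun k _ => hnnsum k
    calc ∑ i, ∑ j, (if cond i j then g i j else 0)
        ≤ ∑ i, ∑ j, ∑ k, (if i ∈ Ek k ∧ j ∈ Ek k ∧ j ≠ i then g i j else 0) :=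
          Finset.sum_le_sum fun i _ => Finset.sum_le_sum fun j _ => pt i j
      _ = ∑ i, ∑ k, ∑ j, (if i ∈ Ek k ∧ j ∈ Ek k ∧ j ≠ i then g i j else 0) :=
          Finset.sum_congr rfl fun i _ => Finset.sum_comm
      _ = ∑ k, ∑ i, ∑ j, (if i ∈ Ek k ∧ j ∈ Ek k ∧ j ≠ i then g i j else 0) :=
          Finset.sum_comm
  -- Step C : per-k bound
  have stepC : ∀ k, ∑ i, ∑ j, (if i ∈ Ek k ∧ j ∈ Ek k ∧ j ≠ i then g i j else 0) ≤
      4 * ((din : ℝ) - 1) * ∑ i, (if i ∈ Ek k then (x i - x k) ^ 2 else 0) := by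
    intro k
    set a : Fin n → ℝ := fun i => (x i - x k) ^ 2 with ha
    have hann : ∀ i, 0 ≤ a i := fun i => sq_nonneg _
    have c1 : ∑ i, ∑ j, (if i ∈ Ek k ∧ j ∈ Ek k ∧ j ≠ i then g i j else 0) ≤
        ∑ i, ∑ j, (if i ∈ Ek k ∧ j ∈ Ek k ∧ j ≠ i then 2 * a i + 2 * a j else 0) := by
      refine Finset.sum_le_sum fun i _ => Finset.sum_le_sum fun j _ => ?_
      split
      · simp only [hg, ha]
        nlinarith [sq_nonneg (x i + x j - 2 * x k)]
      · exact le_refl 0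
    have c2 : ∑ i, ∑ j, (if i ∈ Ek k ∧ j ∈ Ek k ∧ j ≠ i then 2 * a i + 2 * a j else 0) =
        2 * (∑ i, ∑ j, (if i ∈ Ek k ∧ j ∈ Ek k ∧ j ≠ i then a i else 0)) +
        2 * (∑ i, ∑ j, (if i ∈ Ek k ∧ j ∈ Ek k ∧ j ≠ i then a j else 0)) := by
      rw [Finset.mul_sum, Finset.mul_sum, ← Finset.sum_add_distrib]
      refine Finset.sum_congr rfl fun i _ => ?_
      rw [Finset.mul_sum, Finset.mul_sum, ← Finset.sum_add_distrib]
      refine Finset.sum_congr rfl fun j _ => ?_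
      split <;> ring
    have c3 : ∑ i, ∑ j, (if i ∈ Ek k ∧ j ∈ Ek k ∧ j ≠ i then a i else 0) ≤
        ((din : ℝ) - 1) * ∑ i, (if i ∈ Ek k then a i else 0) :=
      inner_bound (Ek k) (hEkcard k) a hann
    have c4 : ∑ i, ∑ j, (if i ∈ Ek k ∧ j ∈ Ek k ∧ j ≠ i then a j else 0) ≤
        ((din : ℝ) - 1) * ∑ i, (if i ∈ Ek k then a i else 0) := by
      have swap : ∑ i, ∑ j, (if i ∈ Ek k ∧ j ∈ Ek k ∧ j ≠ i then a j else 0) =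
          ∑ i, ∑ j, (if i ∈ Ek k ∧ j ∈ Ek k ∧ j ≠ i then a i else 0) := by
        rw [Finset.sum_comm]
        refine Finset.sum_congr rfl fun i _ => Finset.sum_congr rfl fun j _ => ?_
        congr 1
        · simp only [eq_iff_iff]
          constructor
          · rintro ⟨u1, u2, u3⟩; exact ⟨u2, u1, u3.symm⟩
          · rintro ⟨u1, u2, u3⟩; exact ⟨u2, u1, u3.symm⟩
      rw [swap]
      exact c3
    calc ∑ i, ∑ j, (if i ∈ Ek k ∧ j ∈ Ek k ∧ j ≠ i then g i j else 0)
        ≤ 2 * (∑ i, ∑ j, (if i ∈ Ek k ∧ j ∈ Ek k ∧ j ≠ i then a i else 0)) +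
          2 * (∑ i, ∑ j, (if i ∈ Ek k ∧ j ∈ Ek k ∧ j ≠ i then a j else 0)) := by
          rw [← c2]; exact c1
      _ ≤ 4 * ((din : ℝ) - 1) * ∑ i, (if i ∈ Ek k then a i else 0) := by linarith
  -- Step D
  have stepD : ∑ k, ∑ i, (if i ∈ Ek k then (x i - x k) ^ 2 else 0) ≤ qf1 := by
    rw [hqf1, Finset.sum_comm]
    refine Finset.sum_le_sum fun i _ => Finset.sum_le_sum fun k _ => ?_
    by_cases hik : i ∈ Ek k
    · have hm := Finset.mem_filter.mp hik
      have : adjMat P i k = 1 := adjMat_eq_one hm.2.1 (Or.inl hm.2.2)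
      rw [if_pos hik, this, one_mul]
    · rw [if_neg hik]
      exact mul_nonneg (adjMat_nonneg _ _ _) (hgnn i k)
  -- combine
  have hdc : (1 : ℝ) ≤ (din : ℝ) := by exact_mod_cast h1
  have chain : ∑ k, ∑ i, ∑ j, (if i ∈ Ek k ∧ j ∈ Ek k ∧ j ≠ i then g i j else 0) ≤
      4 * ((din : ℝ) - 1) * qf1 := by
    calc ∑ k, ∑ i, ∑ j, (if i ∈ Ek k ∧ j ∈ Ek k ∧ j ≠ i then g i j else 0)
        ≤ ∑ k, 4 * ((din : ℝ) - 1) * ∑ i, (if i ∈ Ek k then (x i - x k) ^ 2 else 0) :=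
          Finset.sum_le_sum fun k _ => stepC k
      _ = 4 * ((din : ℝ) - 1) * ∑ k, ∑ i, (if i ∈ Ek k then (x i - x k) ^ 2 else 0) := by
          rw [Finset.mul_sum]
      _ ≤ 4 * ((din : ℝ) - 1) * qf1 := by
          have h4 : (0:ℝ) ≤ 4 * ((din : ℝ) - 1) := by linarith
          exact mul_le_mul_of_nonneg_left stepD h4
  calc ∑ i, ∑ j, adjMat (Pstar P mu * P) i j * g i j
      ≤ qf1 + 4 * ((din : ℝ) - 1) * qf1 := by
        have := stepB.trans chain
        linarith [stepA]
    _ ≤ (4 * (din : ℝ) - 2) * qf1 := by nlinarith [hqf1nn, hdc]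


lemma lap_symm {n : ℕ} (C : Matrix (Fin n) (Fin n) ℝ) (hsym : Cᵀ = C) :
    (lap C)ᵀ = lap C := by
  unfold lap
  rw [transpose_sub, Matrix.diagonal_transpose, hsym]

lemma lap_psd {n : ℕ} (C : Matrix (Fin n) (Fin n) ℝ) (hsym : Cᵀ = C)
    (hnn : ∀ i j, 0 ≤ C i j) (x : Fin n → ℝ) : 0 ≤ x ⬝ᵥ (lap C *ᵥ x) := by
  have := lap_quad C hsym x
  have hnn2 : 0 ≤ ∑ i, ∑ j, C i j * (x i - x j) ^ 2 :=
    Finset.sum_nonneg fun i _ => Finset.sum_nonneg fun j _ =>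
      mul_nonneg (hnn i j) (sq_nonneg _)
  linarith

lemma effRes_self {n : ℕ} (C : Matrix (Fin n) (Fin n) ℝ) (a : Fin n) :
    effRes C a a = 0 := by
  unfold effRes
  have hex : ∃ v : Fin n → ℝ, lap C *ᵥ v = Pi.single a 1 - Pi.single a 1 :=
    ⟨0, by rw [mulVec_zero, sub_self]⟩
  rw [dif_pos hex, sub_self]

/-- If `P*P = PP*`, then
`(1/(4δ_in − 2)) R_{uv}(G(P)) ≤ R_{uv}(G(P*P)) ≤ R_{uv}(G(P))`. -/
theorem stmt16 {n : ℕ} (P : Matrix (Fin n) (Fin n) ℝ) (mu : Fin n → ℝ)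
    (hP : IsConsensus P) (hmu : IsInvMeasure P mu)
    (hcomm : Pstar P mu * P = P * Pstar P mu)
    (din : ℕ) (hdin : (∀ j, inDeg P j ≤ din) ∧ ∃ j, inDeg P j = din) :
    ∀ u v : Fin n,
      (1 / (4 * (din : ℝ) - 2)) * effRes (adjMat P) u v ≤
          effRes (adjMat (Pstar P mu * P)) u v ∧
        effRes (adjMat (Pstar P mu * P)) u v ≤ effRes (adjMat P) u v := by
  obtain ⟨hnn, hrow, hirr, hdiag⟩ := hP
  obtain ⟨hmup, hmus, hmufix⟩ := hmu
  intro u v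
  by_cases huv : u = v
  · subst huv
    rw [effRes_self, effRes_self]
    norm_num
  -- nontrivial case
  have hn : 0 < n := Nat.pos_of_ne_zero (by rintro rfl; exact u.elim0)
  have hd1 : 1 ≤ din := one_le_din P hirr huv din hdin.1
  have hdc : (1 : ℝ) ≤ (din : ℝ) := by exact_mod_cast hd1
  set A1 : Matrix (Fin n) (Fin n) ℝ := adjMat P with hA1
  set A2 : Matrix (Fin n) (Fin n) ℝ := adjMat (Pstar P mu * P) with hA2
  have hA1symm : A1ᵀ = A1 := adjMat_symm P
  have hA2symm : A2ᵀ = A2 := adjMat_symm _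
  have hA1nn : ∀ i j, 0 ≤ A1 i j := adjMat_nonneg P
  have hA2nn : ∀ i j, 0 ≤ A2 i j := adjMat_nonneg _
  -- A1 edge implies A2 edge
  have hedge : ∀ i j, A1 i j ≠ 0 → A2 i j = 1 := by
    intro i j h
    obtain ⟨hij, hd2⟩ := adjMat_ne_zero h
    refine adjMat_eq_one hij (Or.inl ?_)
    rw [PsP_ne_iff P mu hnn hmup]
    rcases hd2 with h | h
    · exact ⟨i, (hdiag i).ne', h⟩
    · exact ⟨j, h, (hdiag j).ne'⟩
  -- connectivity hypotheses
  have hconn1 : ∀ x : Fin n → ℝ, (∀ i j, A1 i j ≠ 0 → x i = x j) → ∀ i j, x i = x j := by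
    intro x hx
    refine conn_of_irred P hirr x fun a b hPab => ?_
    by_cases hab : a = b
    · rw [hab]
    · exact hx a b (by rw [hA1, adjMat_eq_one hab (Or.inl hPab)]; exact one_ne_zero)
  have hconn2 : ∀ x : Fin n → ℝ, (∀ i j, A2 i j ≠ 0 → x i = x j) → ∀ i j, x i = x j := by
    intro x hx
    refine conn_of_irred P hirr x fun a b hPab => ?_
    by_cases hab : a = b
    · rw [hab]
    · refine hx a b ?_
      rw [hedge a b (by rw [hA1, adjMat_eq_one hab (Or.inl hPab)]; exact one_ne_zero)]
      exact one_ne_zero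
  set f : Fin n → ℝ := Pi.single u 1 - Pi.single v 1 with hf
  have hfsum : ∑ i, f i = 0 := by
    simp [hf, Finset.sum_sub_distrib, Finset.sum_pi_single]
  obtain ⟨w1, hw1⟩ := exists_sol A1 hA1symm hA1nn hconn1 hn f hfsum
  obtain ⟨w2, hw2⟩ := exists_sol A2 hA2symm hA2nn hconn2 hn f hfsum
  have hex1 : ∃ w : Fin n → ℝ, lap A1 *ᵥ w = Pi.single u 1 - Pi.single v 1 := ⟨w1, hw1⟩
  have hex2 : ∃ w : Fin n → ℝ, lap A2 *ᵥ w = Pi.single u 1 - Pi.single v 1 := ⟨w2, hw2⟩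
  have heff1 : effRes A1 u v = f ⬝ᵥ hex1.choose := by
    rw [effRes, dif_pos hex1, hf, dot_single_sub]
  have heff2 : effRes A2 u v = f ⬝ᵥ hex2.choose := by
    rw [effRes, dif_pos hex2, hf, dot_single_sub]
  have hs1 : lap A1 *ᵥ hex1.choose = f := hex1.choose_spec
  have hs2 : lap A2 *ᵥ hex2.choose = f := hex2.choose_spec
  -- quadratic form comparison
  have hle12 : ∀ x : Fin n → ℝ, x ⬝ᵥ (lap A1 *ᵥ x) ≤ x ⬝ᵥ (lap A2 *ᵥ x) := by
    intro x
    have q1 := lap_quad A1 hA1symm x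
    have q2 := lap_quad A2 hA2symm x
    have hqle : ∑ i, ∑ j, A1 i j * (x i - x j) ^ 2 ≤ ∑ i, ∑ j, A2 i j * (x i - x j) ^ 2 := by
      refine Finset.sum_le_sum fun i _ => Finset.sum_le_sum fun j _ => ?_
      by_cases h : A1 i j = 0
      · rw [h, zero_mul]
        exact mul_nonneg (hA2nn i j) (sq_nonneg _)
      · have e1 : A1 i j = 1 := by
          obtain ⟨hij, hd2⟩ := adjMat_ne_zero h
          exact adjMat_eq_one hij hd2
        rw [e1, hedge i j h]
    linarith
  set c : ℝ := 4 * (din : ℝ) - 2 with hc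
  have hcpos : 0 < c := by rw [hc]; linarith
  have hle2c : ∀ x : Fin n → ℝ, x ⬝ᵥ (lap A2 *ᵥ x) ≤ x ⬝ᵥ ((c • lap A1) *ᵥ x) := by
    intro x
    have q1 := lap_quad A1 hA1symm x
    have q2 := lap_quad A2 hA2symm x
    have hqb := quad_bound P mu hnn hdiag hmup hcomm hdin.1 hd1 x
    rw [← hA1, ← hA2] at hqb
    have e1 : x ⬝ᵥ ((c • lap A1) *ᵥ x) = c * (x ⬝ᵥ (lap A1 *ᵥ x)) := by
      rw [Matrix.smul_mulVec, dotProduct_smul, smul_eq_mul]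
    rw [← q1, ← q2] at hqb
    rw [e1, hc]
    linarith
  constructor
  · -- lower bound
    have hsol : (c • lap A1) *ᵥ (c⁻¹ • hex1.choose) = f := by
      rw [Matrix.smul_mulVec, mulVec_smul, hs1, smul_smul, mul_inv_cancel₀ hcpos.ne',
        one_smul]
    have := dirichlet_compare (lap A2) (c • lap A1) (lap_symm A2 hA2symm)
      (lap_psd A2 hA2symm hA2nn) hle2c f hex2.choose (c⁻¹ • hex1.choose) hs2 hsol
    rw [heff1, heff2]
    have e2 : f ⬝ᵥ (c⁻¹ • hex1.choose) = c⁻¹ * (f ⬝ᵥ hex1.choose) := by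
      rw [dotProduct_smul, smul_eq_mul]
    rw [e2] at this
    rw [one_div]
    exact this
  · -- upper bound
    have := dirichlet_compare (lap A1) (lap A2) (lap_symm A1 hA1symm)
      (lap_psd A1 hA1symm hA1nn) hle12 f hex1.choose hex2.choose hs1 hs2
    rw [heff1, heff2]
    exact this
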